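/- For the picture cube puzzle group, the subgroup H of S_4^{m×n} generated by the row moves (right multiplication of a row by u = (1 4 2 3) or d = (1 3 2 4)) and column moves (right multiplication of a column by l = (1 3 4 2) or r = (1 2 4 3)) has order 2^{m+n-1} · 12^{mn}. -/

import Mathlib

set_option maxRecDepth 10000

def rowMove {G : Type*} [Group G] (m n : ℕ) (r : G) (i : Fin m) : Fin m → Fin n → G :=
  fun i' _ => if i' = i then r else 1

def colMove {G : Type*} [Group G] (m n : ℕ) (c : G) (j : Fin n) : Fin m → Fin n → G :=
  fun _ j' => if j' = j then c else 1

def cubeU : Equiv.Perm (Fin 4) := c[(0 : Fin 4), 3, 1, 2]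
def cubeD : Equiv.Perm (Fin 4) := c[(0 : Fin 4), 2, 1, 3]
def cubeL : Equiv.Perm (Fin 4) := c[(0 : Fin 4), 2, 3, 1]
def cubeR : Equiv.Perm (Fin 4) := c[(0 : Fin 4), 1, 3, 2]

def cubeMoves (m n : ℕ) : Set (Fin m → Fin n → Equiv.Perm (Fin 4)) :=
  {f | ∃ i, f = rowMove m n cubeU i ∨ f = rowMove m n cubeD i} ∪
  {f | ∃ j, f = colMove m n cubeL j ∨ f = colMove m n cubeR j}

namespace CubeAux

open scoped commutatorElement

abbrev G (m n : ℕ) := Fin m → Fin n → Equiv.Perm (Fin 4)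

def signHom (m n : ℕ) : G m n →* (Fin m → Fin n → ℤˣ) where
  toFun f := fun i j => Equiv.Perm.sign (f i j)
  map_one' := by funext i j; simp
  map_mul' f g := by funext i j; simp

def Patt (m n : ℕ) : Subgroup (Fin m → Fin n → ℤˣ) where
  carrier := {p | ∃ (ε : Fin m → ℤˣ) (δ : Fin n → ℤˣ), ∀ i j, p i j = ε i * δ j}
  one_mem' := ⟨1, 1, by simp⟩
  mul_mem' := by
    rintro p q ⟨ε, δ, h⟩ ⟨ε', δ', h'⟩
    exact ⟨ε * ε', δ * δ', fun i j => by
      simp only [Pi.mul_apply, h, h']; exact mul_mul_mul_comm _ _ _ _⟩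
  inv_mem' := by
    rintro p ⟨ε, δ, h⟩
    exact ⟨ε⁻¹, δ⁻¹, fun i j => by
      simp only [Pi.inv_apply, h, mul_inv]⟩

def elemHom (m n : ℕ) (i : Fin m) (j : Fin n) : Equiv.Perm (Fin 4) →* G m n where
  toFun x := fun i' j' => if i' = i ∧ j' = j then x else 1
  map_one' := by funext i' j'; simp
  map_mul' x y := by
    funext i' j'
    by_cases h : i' = i ∧ j' = j <;> simp [h]

lemma commutator_eq (m n : ℕ) (u c : Equiv.Perm (Fin 4)) (i : Fin m) (j : Fin n) :
    ⁅rowMove m n u i, colMove m n c j⁆ = elemHom m n i j ⁅u, c⁆ := by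
  funext i' j'
  simp only [commutatorElement_def, rowMove, colMove, elemHom, MonoidHom.coe_mk, OneHom.coe_mk,
    Pi.mul_apply, Pi.inv_apply]
  by_cases hi : i' = i <;> by_cases hj : j' = j <;> simp [hi, hj]

section

variable (m n : ℕ)

lemma rowU_mem (i : Fin m) : rowMove m n cubeU i ∈ Subgroup.closure (cubeMoves m n) :=
  Subgroup.subset_closure (Or.inl ⟨i, Or.inl rfl⟩)

lemma rowD_mem (i : Fin m) : rowMove m n cubeD i ∈ Subgroup.closure (cubeMoves m n) :=
  Subgroup.subset_closure (Or.inl ⟨i, Or.inr rfl⟩)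

lemma colL_mem (j : Fin n) : colMove m n cubeL j ∈ Subgroup.closure (cubeMoves m n) :=
  Subgroup.subset_closure (Or.inr ⟨j, Or.inl rfl⟩)

lemma colR_mem (j : Fin n) : colMove m n cubeR j ∈ Subgroup.closure (cubeMoves m n) :=
  Subgroup.subset_closure (Or.inr ⟨j, Or.inr rfl⟩)

set_option maxHeartbeats 2000000 in
lemma alt_words : ∀ x : Equiv.Perm (Fin 4), Equiv.Perm.sign x = 1 →
    x = 1 ∨ x = ⁅cubeU, cubeR⁆ ∨ x = ⁅cubeU, cubeL⁆ ∨ x = ⁅cubeU, cubeR⁆ * ⁅cubeU, cubeR⁆ ∨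
    x = ⁅cubeU, cubeR⁆ * ⁅cubeU, cubeL⁆ ∨ x = ⁅cubeU, cubeL⁆ * ⁅cubeU, cubeR⁆ ∨
    x = ⁅cubeU, cubeL⁆ * ⁅cubeU, cubeL⁆ ∨
    x = ⁅cubeU, cubeR⁆ * ⁅cubeU, cubeR⁆ * ⁅cubeU, cubeL⁆ ∨
    x = ⁅cubeU, cubeR⁆ * ⁅cubeU, cubeL⁆ * ⁅cubeU, cubeL⁆ ∨
    x = ⁅cubeU, cubeR⁆ * ⁅cubeU, cubeL⁆ * ⁅cubeU, cubeR⁆ ∨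
    x = ⁅cubeU, cubeR⁆ * ⁅cubeU, cubeR⁆ * ⁅cubeU, cubeL⁆ * ⁅cubeU, cubeL⁆ ∨
    x = ⁅cubeU, cubeR⁆ * ⁅cubeU, cubeR⁆ * ⁅cubeU, cubeL⁆ * ⁅cubeU, cubeR⁆ := by decide

set_option maxHeartbeats 2000000 in
lemma elem_mem (i : Fin m) (j : Fin n) (x : Equiv.Perm (Fin 4))
    (hx : Equiv.Perm.sign x = 1) :
    elemHom m n i j x ∈ Subgroup.closure (cubeMoves m n) := by
  set H := Subgroup.closure (cubeMoves m n) with hH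
  have ha : elemHom m n i j ⁅cubeU, cubeR⁆ ∈ H := by
    rw [← commutator_eq]
    exact H.mul_mem (H.mul_mem (H.mul_mem (rowU_mem m n i) (colR_mem m n j))
      (H.inv_mem (rowU_mem m n i))) (H.inv_mem (colR_mem m n j))
  have hb : elemHom m n i j ⁅cubeU, cubeL⁆ ∈ H := by
    rw [← commutator_eq]
    exact H.mul_mem (H.mul_mem (H.mul_mem (rowU_mem m n i) (colL_mem m n j))
      (H.inv_mem (rowU_mem m n i))) (H.inv_mem (colL_mem m n j))
  rcases alt_words x hx with rfl|rfl|rfl|rfl|rfl|rfl|rfl|rfl|rfl|rfl|rfl|rfl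
  · rw [map_one]; exact H.one_mem
  · exact ha
  · exact hb
  · rw [map_mul]; exact H.mul_mem ha ha
  · rw [map_mul]; exact H.mul_mem ha hb
  · rw [map_mul]; exact H.mul_mem hb ha
  · rw [map_mul]; exact H.mul_mem hb hb
  · rw [map_mul, map_mul]; exact H.mul_mem (H.mul_mem ha ha) hb
  · rw [map_mul, map_mul]; exact H.mul_mem (H.mul_mem ha hb) hb
  · rw [map_mul, map_mul]; exact H.mul_mem (H.mul_mem ha hb) ha
  · rw [map_mul, map_mul, map_mul]; exact H.mul_mem (H.mul_mem (H.mul_mem ha ha) hb) hb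
  · rw [map_mul, map_mul, map_mul]; exact H.mul_mem (H.mul_mem (H.mul_mem ha ha) hb) ha

lemma even_mem_aux : ∀ (k : ℕ) (f : G m n), (∀ i j, Equiv.Perm.sign (f i j) = 1) →
    (Finset.univ.filter fun p : Fin m × Fin n => f p.1 p.2 ≠ 1).card ≤ k →
    f ∈ Subgroup.closure (cubeMoves m n) := by
  intro k
  induction k with
  | zero =>
    intro f hf hcard
    have hall : ∀ i j, f i j = 1 := by
      intro i j
      by_contra h
      have : (i, j) ∈ Finset.univ.filter fun p : Fin m × Fin n => f p.1 p.2 ≠ 1 := by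
        simp [h]
      have := Finset.card_pos.mpr ⟨_, this⟩
      omega
    have : f = 1 := by funext i j; exact hall i j
    rw [this]; exact Subgroup.one_mem _
  | succ k ih =>
    intro f hf hcard
    by_cases hall : ∀ i j, f i j = 1
    · have : f = 1 := by funext i j; exact hall i j
      rw [this]; exact Subgroup.one_mem _
    · push_neg at hall
      obtain ⟨i, j, hij⟩ := hall
      set f' : G m n := fun i' j' => if i' = i ∧ j' = j then 1 else f i' j' with hf'
      have hsplit : f = elemHom m n i j (f i j) * f' := by
        funext i' j'
        simp only [Pi.mul_apply, elemHom, MonoidHom.coe_mk, OneHom.coe_mk, hf']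
        by_cases h : i' = i ∧ j' = j
        · obtain ⟨rfl, rfl⟩ := h; simp
        · simp [h]
      have hmem : (i, j) ∈ Finset.univ.filter fun p : Fin m × Fin n => f p.1 p.2 ≠ 1 := by
        simp [hij]
      have hsub : (Finset.univ.filter fun p : Fin m × Fin n => f' p.1 p.2 ≠ 1) ⊆
          (Finset.univ.filter fun p : Fin m × Fin n => f p.1 p.2 ≠ 1).erase (i, j) := by
        intro p hp
        simp only [Finset.mem_filter, Finset.mem_univ, true_and, hf'] at hp
        rw [Finset.mem_erase]
        by_cases h : p.1 = i ∧ p.2 = j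
        · simp [h] at hp
        · refine ⟨?_, by simpa [Finset.mem_filter, if_neg h] using hp⟩
          rintro rfl
          exact h ⟨rfl, rfl⟩
      have hcard' : (Finset.univ.filter fun p : Fin m × Fin n => f' p.1 p.2 ≠ 1).card ≤ k := by
        have h1 := Finset.card_le_card hsub
        have h2 := Finset.card_erase_of_mem hmem
        omega
      have hf'sign : ∀ i' j', Equiv.Perm.sign (f' i' j') = 1 := by
        intro i' j'
        simp only [hf']
        split_ifs with h
        · simp
        · exact hf i' j'
      rw [hsplit]
      exact Subgroup.mul_mem _ (elem_mem m n i j _ (hf i j)) (ih f' hf'sign hcard')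

lemma even_mem (f : G m n) (hf : ∀ i j, Equiv.Perm.sign (f i j) = 1) :
    f ∈ Subgroup.closure (cubeMoves m n) :=
  even_mem_aux m n _ f hf le_rfl

lemma rowMove_pow (x : Equiv.Perm (Fin 4)) (k : ℕ) (i : Fin m) :
    rowMove m n (x ^ k) i = (rowMove m n x i) ^ k := by
  funext i' j'
  simp only [rowMove, Pi.pow_apply]
  split_ifs <;> simp

lemma colMove_pow (x : Equiv.Perm (Fin 4)) (k : ℕ) (j : Fin n) :
    colMove m n (x ^ k) j = (colMove m n x j) ^ k := by
  funext i' j'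
  simp only [colMove, Pi.pow_apply]
  split_ifs <;> simp

lemma rowMove_one (i : Fin m) : rowMove m n (1 : Equiv.Perm (Fin 4)) i = 1 := by
  funext i' j'; simp [rowMove]

lemma colMove_one (j : Fin n) : colMove m n (1 : Equiv.Perm (Fin 4)) j = 1 := by
  funext i' j'; simp [colMove]

lemma rows_mem_aux : ∀ (k : ℕ) (v : Fin m → Equiv.Perm (Fin 4)),
    (∀ i, rowMove m n (v i) i ∈ Subgroup.closure (cubeMoves m n)) →
    (Finset.univ.filter fun i => v i ≠ 1).card ≤ k →
    (fun i _ => v i : G m n) ∈ Subgroup.closure (cubeMoves m n) := by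
  intro k
  induction k with
  | zero =>
    intro v hv hcard
    have hall : ∀ i, v i = 1 := by
      intro i
      by_contra h
      have : i ∈ Finset.univ.filter fun i => v i ≠ 1 := by simp [h]
      have := Finset.card_pos.mpr ⟨_, this⟩
      omega
    have : (fun i _ => v i : G m n) = 1 := by funext i j; simp [hall i]
    rw [this]; exact Subgroup.one_mem _
  | succ k ih =>
    intro v hv hcard
    by_cases hall : ∀ i, v i = 1
    · have : (fun i _ => v i : G m n) = 1 := by funext i j; simp [hall i]
      rw [this]; exact Subgroup.one_mem _
    · push_neg at hall
      obtain ⟨i₀, h0⟩ := hall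
      set v' : Fin m → Equiv.Perm (Fin 4) := fun i => if i = i₀ then 1 else v i with hv'
      have hsplit : (fun i _ => v i : G m n) = rowMove m n (v i₀) i₀ * (fun i _ => v' i) := by
        funext i j
        simp only [Pi.mul_apply, rowMove, hv']
        by_cases h : i = i₀ <;> simp [h]
      have hmem : i₀ ∈ Finset.univ.filter fun i => v i ≠ 1 := by simp [h0]
      have hsub : (Finset.univ.filter fun i => v' i ≠ 1) ⊆
          (Finset.univ.filter fun i => v i ≠ 1).erase i₀ := by
        intro i hi
        simp only [Finset.mem_filter, Finset.mem_univ, true_and, hv'] at hi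
        rw [Finset.mem_erase]
        by_cases h : i = i₀
        · simp [h] at hi
        · exact ⟨h, by simpa [Finset.mem_filter, if_neg h] using hi⟩
      have hcard' : (Finset.univ.filter fun i => v' i ≠ 1).card ≤ k := by
        have h1 := Finset.card_le_card hsub
        have h2 := Finset.card_erase_of_mem hmem
        omega
      have hv'mem : ∀ i, rowMove m n (v' i) i ∈ Subgroup.closure (cubeMoves m n) := by
        intro i
        by_cases h : i = i₀
        · subst h; simp only [hv', if_pos rfl]; rw [rowMove_one]; exact Subgroup.one_mem _
        · simp only [hv', if_neg h]; exact hv i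
      rw [hsplit]
      exact Subgroup.mul_mem _ (hv i₀) (ih v' hv'mem hcard')

lemma cols_mem_aux : ∀ (k : ℕ) (w : Fin n → Equiv.Perm (Fin 4)),
    (∀ j, colMove m n (w j) j ∈ Subgroup.closure (cubeMoves m n)) →
    (Finset.univ.filter fun j => w j ≠ 1).card ≤ k →
    (fun _ j => w j : G m n) ∈ Subgroup.closure (cubeMoves m n) := by
  intro k
  induction k with
  | zero =>
    intro w hw hcard
    have hall : ∀ j, w j = 1 := by
      intro j
      by_contra h
      have : j ∈ Finset.univ.filter fun j => w j ≠ 1 := by simp [h]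
      have := Finset.card_pos.mpr ⟨_, this⟩
      omega
    have : (fun _ j => w j : G m n) = 1 := by funext i j; simp [hall j]
    rw [this]; exact Subgroup.one_mem _
  | succ k ih =>
    intro w hw hcard
    by_cases hall : ∀ j, w j = 1
    · have : (fun _ j => w j : G m n) = 1 := by funext i j; simp [hall j]
      rw [this]; exact Subgroup.one_mem _
    · push_neg at hall
      obtain ⟨j₀, h0⟩ := hall
      set w' : Fin n → Equiv.Perm (Fin 4) := fun j => if j = j₀ then 1 else w j with hw'
      have hsplit : (fun _ j => w j : G m n) = colMove m n (w j₀) j₀ * (fun _ j => w' j) := by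
        funext i j
        simp only [Pi.mul_apply, colMove, hw']
        by_cases h : j = j₀ <;> simp [h]
      have hmem : j₀ ∈ Finset.univ.filter fun j => w j ≠ 1 := by simp [h0]
      have hsub : (Finset.univ.filter fun j => w' j ≠ 1) ⊆
          (Finset.univ.filter fun j => w j ≠ 1).erase j₀ := by
        intro j hj
        simp only [Finset.mem_filter, Finset.mem_univ, true_and, hw'] at hj
        rw [Finset.mem_erase]
        by_cases h : j = j₀
        · simp [h] at hj
        · exact ⟨h, by simpa [Finset.mem_filter, if_neg h] using hj⟩
      have hcard' : (Finset.univ.filter fun j => w' j ≠ 1).card ≤ k := by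
        have h1 := Finset.card_le_card hsub
        have h2 := Finset.card_erase_of_mem hmem
        omega
      have hw'mem : ∀ j, colMove m n (w' j) j ∈ Subgroup.closure (cubeMoves m n) := by
        intro j
        by_cases h : j = j₀
        · subst h; simp only [hw', if_pos rfl]; rw [colMove_one]; exact Subgroup.one_mem _
        · simp only [hw', if_neg h]; exact hw j
      rw [hsplit]
      exact Subgroup.mul_mem _ (hw j₀) (ih w' hw'mem hcard')

lemma signU : Equiv.Perm.sign cubeU = -1 := by decide
lemma signD : Equiv.Perm.sign cubeD = -1 := by decide
lemma signL : Equiv.Perm.sign cubeL = -1 := by decide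
lemma signR : Equiv.Perm.sign cubeR = -1 := by decide

lemma closure_eq :
    Subgroup.closure (cubeMoves m n) = (Patt m n).comap (signHom m n) := by
  apply le_antisymm
  · rw [Subgroup.closure_le]
    rintro f (⟨i, rfl | rfl⟩ | ⟨j, rfl | rfl⟩)
    · exact ⟨fun i' => if i' = i then -1 else 1, 1, fun i' j' => by
        simp only [signHom, MonoidHom.coe_mk, OneHom.coe_mk, rowMove, Pi.one_apply, mul_one]
        split_ifs <;> simp [signU]⟩
    · exact ⟨fun i' => if i' = i then -1 else 1, 1, fun i' j' => by
        simp only [signHom, MonoidHom.coe_mk, OneHom.coe_mk, rowMove, Pi.one_apply, mul_one]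
        split_ifs <;> simp [signD]⟩
    · exact ⟨1, fun j' => if j' = j then -1 else 1, fun i' j' => by
        simp only [signHom, MonoidHom.coe_mk, OneHom.coe_mk, colMove, Pi.one_apply, one_mul]
        split_ifs <;> simp [signL]⟩
    · exact ⟨1, fun j' => if j' = j then -1 else 1, fun i' j' => by
        simp only [signHom, MonoidHom.coe_mk, OneHom.coe_mk, colMove, Pi.one_apply, one_mul]
        split_ifs <;> simp [signR]⟩
  · intro f hf
    obtain ⟨ε, δ, h⟩ := hf
    set H := Subgroup.closure (cubeMoves m n) with hH
    set fR : G m n := fun i _ => cubeU ^ (if ε i = 1 then 0 else 1) with hfR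
    set fC : G m n := fun _ j => cubeR ^ (if δ j = 1 then 0 else 1) with hfC
    have hfRmem : fR ∈ H := by
      apply rows_mem_aux m n _ _ _ le_rfl
      intro i
      rw [rowMove_pow]
      exact Subgroup.pow_mem _ (rowU_mem m n i) _
    have hfCmem : fC ∈ H := by
      apply cols_mem_aux m n _ _ _ le_rfl
      intro j
      rw [colMove_pow]
      exact Subgroup.pow_mem _ (colR_mem m n j) _
    set f₀ : G m n := fR * fC with hf₀
    have hf₀mem : f₀ ∈ H := Subgroup.mul_mem _ hfRmem hfCmem
    have hsign : ∀ i j, Equiv.Perm.sign (f₀ i j) = ε i * δ j := by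
      intro i j
      simp only [hf₀, hfR, hfC, Pi.mul_apply, map_mul, map_pow, signU, signR]
      rcases Int.units_eq_one_or (ε i) with h1 | h1 <;>
        rcases Int.units_eq_one_or (δ j) with h2 | h2 <;> simp [h1, h2]
    have hker : f₀⁻¹ * f ∈ H := by
      apply even_mem
      intro i j
      have hfij : Equiv.Perm.sign (f i j) = ε i * δ j := h i j
      simp only [Pi.mul_apply, Pi.inv_apply, map_mul, map_inv, hsign, hfij]
      rcases Int.units_eq_one_or (ε i) with h1 | h1 <;>
        rcases Int.units_eq_one_or (δ j) with h2 | h2 <;> simp [h1, h2]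
    have := H.mul_mem hf₀mem hker
    rwa [mul_inv_cancel_left] at this

def sgn : ℤˣ → Equiv.Perm (Fin 4) := fun u => if u = 1 then 1 else Equiv.swap 0 1

lemma sign_sgn (u : ℤˣ) : Equiv.Perm.sign (sgn u) = u := by
  rcases Int.units_eq_one_or u with rfl | rfl
  · rw [sgn, if_pos rfl, map_one]
  · rw [sgn, if_neg (by decide)]
    rw [Equiv.Perm.sign_swap (by decide)]

def kEquiv : ((Patt m n).comap (signHom m n)) ≃
    (Patt m n) × (Fin m → Fin n → alternatingGroup (Fin 4)) where
  toFun f := (⟨signHom m n f.1, f.2⟩,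
    fun i j => ⟨(sgn (Equiv.Perm.sign (f.1 i j)))⁻¹ * f.1 i j, by
      rw [Equiv.Perm.mem_alternatingGroup, map_mul, map_inv, sign_sgn, inv_mul_cancel]⟩)
  invFun pg := ⟨fun i j => sgn (pg.1.1 i j) * (pg.2 i j : Equiv.Perm (Fin 4)), by
      have h1 : signHom m n (fun i j => sgn (pg.1.1 i j) * (pg.2 i j : Equiv.Perm (Fin 4)))
          = pg.1.1 := by
        funext i j
        show Equiv.Perm.sign (sgn (pg.1.1 i j) * (pg.2 i j : Equiv.Perm (Fin 4))) = pg.1.1 i j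
        rw [map_mul, sign_sgn, Equiv.Perm.mem_alternatingGroup.mp (pg.2 i j).2, mul_one]
      show signHom m n _ ∈ Patt m n
      rw [h1]; exact pg.1.2⟩
  left_inv f := by
    apply Subtype.ext
    funext i j
    exact mul_inv_cancel_left _ _
  right_inv pg := by
    have hs : ∀ i j, Equiv.Perm.sign (sgn (pg.1.1 i j) * (pg.2 i j : Equiv.Perm (Fin 4)))
        = pg.1.1 i j := by
      intro i j
      rw [map_mul, sign_sgn, Equiv.Perm.mem_alternatingGroup.mp (pg.2 i j).2, mul_one]
    refine Prod.ext ?_ ?_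
    · apply Subtype.ext
      funext i j
      exact hs i j
    · funext i j
      apply Subtype.ext
      show (sgn (Equiv.Perm.sign _))⁻¹ * _ = _
      rw [hs i j]
      exact inv_mul_cancel_left _ _

def pattEquiv (hm : 0 < m) (hn : 0 < n) : (Patt m n) ≃
    (Fin m → ℤˣ) × ({j : Fin n // j ≠ ⟨0, hn⟩} → ℤˣ) where
  toFun p := (fun i => p.1 i ⟨0, hn⟩, fun j => p.1 ⟨0, hm⟩ j.1 * p.1 ⟨0, hm⟩ ⟨0, hn⟩)
  invFun x := ⟨fun i j => x.1 i * (if h : j = ⟨0, hn⟩ then 1 else x.2 ⟨j, h⟩),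
    ⟨x.1, fun j => if h : j = ⟨0, hn⟩ then 1 else x.2 ⟨j, h⟩, fun i j => rfl⟩⟩
  left_inv p := by
    obtain ⟨p, hp⟩ := p
    obtain ⟨ε, δ, h⟩ := hp
    apply Subtype.ext
    funext i j
    dsimp only
    by_cases hj : j = ⟨0, hn⟩
    · subst hj; rw [dif_pos rfl, mul_one]
    · rw [dif_neg hj]
      simp only [h]
      rcases Int.units_eq_one_or (ε i) with h1 | h1 <;>
        rcases Int.units_eq_one_or (ε ⟨0, hm⟩) with h2 | h2 <;>
        rcases Int.units_eq_one_or (δ j) with h3 | h3 <;>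
        rcases Int.units_eq_one_or (δ ⟨0, hn⟩) with h4 | h4 <;>
        simp [h1, h2, h3, h4]
  right_inv x := by
    refine Prod.ext ?_ ?_
    · funext i
      show x.1 i * _ = x.1 i
      rw [dif_pos rfl, mul_one]
    · funext j
      show (x.1 ⟨0, hm⟩ * _) * (x.1 ⟨0, hm⟩ * _) = x.2 j
      rw [dif_neg j.2, dif_pos rfl, mul_one]
      rcases Int.units_eq_one_or (x.1 ⟨0, hm⟩) with h1 | h1 <;>
        rcases Int.units_eq_one_or (x.2 j) with h2 | h2 <;> simp [h1, h2]

end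
end CubeAux

theorem cube_puzzle_group_order (m n : ℕ) (hm : 0 < m) (hn : 0 < n) :
    Nat.card (Subgroup.closure (cubeMoves m n)) = 2 ^ (m + n - 1) * 12 ^ (m * n) := by
  rw [CubeAux.closure_eq]
  rw [Nat.card_congr (CubeAux.kEquiv m n), Nat.card_prod,
    Nat.card_congr (CubeAux.pattEquiv m n hm hn), Nat.card_prod]
  have c1 : Nat.card (Fin m → ℤˣ) = 2 ^ m := by
    rw [Nat.card_eq_fintype_card, Fintype.card_fun, Fintype.card_fin,
      show Fintype.card ℤˣ = 2 by decide]
  have c2 : Nat.card ({j : Fin n // j ≠ ⟨0, hn⟩} → ℤˣ) = 2 ^ (n - 1) := by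
    have hc : Fintype.card {j : Fin n // j ≠ ⟨0, hn⟩} = n - 1 := by
      have := Fintype.card_subtype_compl (α := Fin n) (· = (⟨0, hn⟩ : Fin n))
      rw [Fintype.card_subtype_eq, Fintype.card_fin] at this
      exact this
    rw [Nat.card_eq_fintype_card, Fintype.card_fun, hc, show Fintype.card ℤˣ = 2 by decide]
  have c3 : Nat.card (Fin m → Fin n → (alternatingGroup (Fin 4))) = 12 ^ (m * n) := by
    rw [Nat.card_eq_fintype_card, Fintype.card_fun, Fintype.card_fun, Fintype.card_fin,
      Fintype.card_fin, show Fintype.card (alternatingGroup (Fin 4)) = 12 by decide,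
      ← pow_mul, Nat.mul_comm]
  rw [c1, c2, c3, ← pow_add]
  congr 2
  omega
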